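/- Let σ be a permutation of size n with σₙ = n. There is a bijection between the preimages of σ under the bubblesort operator B and the subsets of the set of left-to-right maxima of σ different from n. Explicitly, for a subset S = {s₁ < ⋯ < s_j} of left-to-right maxima different from n, writing σ = B₀ s₁ B₁ s₂ B₂ ⋯ s_j B_j n, the corresponding preimage is s₁ B₀ s₂ B₁ ⋯ s_j B_{j−1} n B_j. -/

import Mathlib

/-- One pass of bubblesort on a list of naturals. -/
def bpass : List ℕ → List ℕ
  | [] => []
  | [a] => [a]
  | a :: b :: l => if b < a then b :: bpass (a :: l) else a :: bpass (b :: l)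

/-- The identity permutation 1 2 ... n as a list. -/
def idList (n : ℕ) : List ℕ := List.map (· + 1) (List.range n)

/-- `l` is (the word of) a permutation of size `n`, i.e. a rearrangement of 1,...,n. -/
def IsPermList (n : ℕ) (l : List ℕ) : Prop := l.Perm (idList n)

/-- position `j` of `l` holds a left-to-right maximum. -/
def IsLTRMax (l : List ℕ) (j : ℕ) : Prop :=
  j < l.length ∧ ∀ i < j, l.getD i 0 < l.getD j 0

instance (l : List ℕ) (j : ℕ) : Decidable (IsLTRMax l j) := by
  unfold IsLTRMax; infer_instance

/-- the number of left-to-right maxima of `l`. -/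
def ltrCount (l : List ℕ) : ℕ :=
  ((List.range l.length).filter fun j => decide (IsLTRMax l j)).length

/-- the length of the longest suffix of `l` consisting of left-to-right maxima. -/
def suffLen (l : List ℕ) : ℕ :=
  ((List.range l.length).takeWhile fun j => decide (IsLTRMax l (l.length - 1 - j))).length

/-- `σ` is a node of the tree `T(π)` of iterated bubblesort preimages. -/
def IsNode (n : ℕ) (π σ : List ℕ) : Prop :=
  IsPermList n σ ∧ ∃ j, bpass^[j] σ = π

/-- `σ` is a node of `T(π)` at height `j` (j passes needed to reach π, and no fewer). -/
def IsNodeAt (n : ℕ) (π σ : List ℕ) (j : ℕ) : Prop :=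
  IsPermList n σ ∧ bpass^[j] σ = π ∧ ∀ i < j, bpass^[i] σ ≠ π

/-- `τ` is a leaf: it has no child, i.e. no bubblesort preimage other than itself. -/
def IsLeafNode (n : ℕ) (τ : List ℕ) : Prop :=
  ¬ ∃ ρ, IsPermList n ρ ∧ ρ ≠ τ ∧ bpass ρ = τ

/-- `T(π)` and `T(τ)` are isomorphic as rooted trees: there is a bijection between
their node sets sending root to root and commuting with the parent map `bpass`. -/
def TreeIso (n : ℕ) (π τ : List ℕ) : Prop :=
  ∃ φ : List ℕ → List ℕ,
    (∀ σ, IsNode n π σ → IsNode n τ (φ σ)) ∧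
    (∀ σ σ', IsNode n π σ → IsNode n π σ' → φ σ = φ σ' → σ = σ') ∧
    (∀ ρ, IsNode n τ ρ → ∃ σ, IsNode n π σ ∧ φ σ = ρ) ∧
    φ π = τ ∧
    (∀ σ, IsNode n π σ → σ ≠ π → φ (bpass σ) = bpass (φ σ))

namespace BB

def sform (Q : List (ℕ × List ℕ)) : List ℕ := Q.flatMap fun q => q.2 ++ [q.1]
def tform (Q : List (ℕ × List ℕ)) : List ℕ := Q.flatMap fun q => q.1 :: q.2

@[simp] lemma sform_nil : sform [] = [] := rfl
@[simp] lemma sform_cons (q) (Q) : sform (q :: Q) = q.2 ++ q.1 :: sform Q := by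
  simp [sform]
@[simp] lemma tform_nil : tform [] = [] := rfl
@[simp] lemma tform_cons (q) (Q) : tform (q :: Q) = q.1 :: (q.2 ++ tform Q) := by
  simp [tform]
lemma sform_append (A B) : sform (A ++ B) = sform A ++ sform B := by simp [sform]

lemma bpass_perm (l : List ℕ) : (bpass l).Perm l := by
  induction l using bpass.induct with
  | case1 => simp [bpass]
  | case2 a => simp [bpass]
  | case3 a b l h ih => rw [bpass, if_pos h]; exact ((ih.cons b).trans (List.Perm.swap a b l))
  | case4 a b l h ih => rw [bpass, if_neg h]; exact ih.cons a

lemma bpass_block (c : ℕ) (D r : List ℕ) (h : ∀ d ∈ D, d < c) :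
    bpass (c :: (D ++ r)) = D ++ bpass (c :: r) := by
  induction D with
  | nil => rfl
  | cons d D ih =>
      have hd : d < c := h d (by simp)
      simp only [List.cons_append]
      rw [bpass, if_pos hd, ih (fun x hx => h x (by simp [hx]))]

lemma bpass_tform (Q : List (ℕ × List ℕ)) (hne : Q ≠ [])
    (hpw : (Q.map Prod.fst).Pairwise (· < ·))
    (hb : ∀ q ∈ Q, ∀ b ∈ q.2, b < q.1) :
    bpass (tform Q) = sform Q := by
  induction Q with
  | nil => simp at hne
  | cons q Q ih =>
      obtain ⟨s, B⟩ := q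
      have hB : ∀ b ∈ B, b < s := fun b hb' => hb (s, B) (by simp) b hb'
      cases Q with
      | nil =>
          simp only [tform_cons, sform_cons, tform_nil, sform_nil, List.append_nil]
          have := bpass_block s B [] hB
          simp only [List.append_nil] at this
          rw [this]; simp [bpass]
      | cons q' Q' =>
          obtain ⟨s', B'⟩ := q'
          have hss' : s < s' := by
            simp only [List.map_cons, List.pairwise_cons] at hpw
            exact hpw.1 s' (by simp)
          have ih' := ih (by simp)
            (by simp only [List.map_cons, List.pairwise_cons] at hpw ⊢; exact hpw.2)
            (fun q hq => hb q (by simp [hq]))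
          simp only [tform_cons, sform_cons] at ih' ⊢
          rw [bpass_block s B _ hB]
          rw [show (s :: (s' :: (B' ++ tform Q')) : List ℕ) = s :: s' :: (B' ++ tform Q') from rfl]
          rw [bpass, if_neg (by omega)]
          rw [ih']



lemma exists_pairs (l : List ℕ) (hne : l ≠ []) (hnd : l.Nodup) :
    ∃ P : List (ℕ × List ℕ), P ≠ [] ∧ (P.map Prod.fst).Pairwise (· < ·) ∧
      (∀ q ∈ P, ∀ b ∈ q.2, b < q.1) ∧ l = tform P ∧ bpass l = sform P := by
  induction l using bpass.induct with
  | case1 => simp at hne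
  | case2 a =>
      refine ⟨[(a, [])], by simp, by simp, by simp, by simp, by simp [bpass]⟩
  | case3 a b l h ih =>
      have hnd' : (a :: l).Nodup := by
        have : (a :: l).Sublist (a :: b :: l) := by
          exact List.Sublist.cons₂ a (List.sublist_cons_self b l)
        exact this.nodup hnd
      obtain ⟨P', hne', hpw', hb', ht', hs'⟩ := ih (by simp) hnd'
      match P', ht' with
      | (a1, B) :: R, ht' =>
        simp only [tform_cons, List.cons.injEq] at ht'
        obtain ⟨rfl, hBl⟩ := ht'
        refine ⟨(a, b :: B) :: R, by simp, by simpa using hpw', ?_, ?_, ?_⟩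
        · intro q hq
          rcases List.mem_cons.1 hq with rfl | hq
          · intro x hx
            rcases List.mem_cons.1 hx with rfl | hx
            · exact h
            · exact hb' (a, B) (by simp) x hx
          · exact hb' q (by simp [hq])
        · simp [← hBl]
        · rw [bpass, if_pos h, hs']
          simp
  | case4 a b l h ih =>
      have hnd' : (b :: l).Nodup := (List.sublist_cons_self a (b :: l)).nodup hnd
      obtain ⟨P', hne', hpw', hb', ht', hs'⟩ := ih (by simp) hnd'
      match P', ht' with
      | (b1, B) :: R, ht' =>
        simp only [tform_cons, List.cons.injEq] at ht'
        obtain ⟨rfl, hBl⟩ := ht'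
        have hab : a < b := by
          have hne_ab : a ≠ b := by
            simp only [List.nodup_cons, List.mem_cons] at hnd
            exact fun hc => hnd.1 (Or.inl hc)
          omega
        refine ⟨(a, []) :: (b, B) :: R, by simp, ?_, ?_, ?_, ?_⟩
        · simp only [List.map_cons, List.pairwise_cons] at hpw' ⊢
          refine ⟨?_, hpw'⟩
          intro y hy
          rcases List.mem_cons.1 hy with rfl | hy
          · exact hab
          · exact lt_trans hab (hpw'.1 y hy)
        · intro q hq
          rcases List.mem_cons.1 hq with rfl | hq
          · simp
          · exact hb' q hq
        · simp [← hBl]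
        · rw [bpass, if_neg h, hs']
          simp

lemma tform_inj : ∀ Q Q' : List (ℕ × List ℕ),
    (Q.map Prod.fst).Pairwise (· < ·) → (∀ q ∈ Q, ∀ b ∈ q.2, b < q.1) →
    (Q'.map Prod.fst).Pairwise (· < ·) → (∀ q ∈ Q', ∀ b ∈ q.2, b < q.1) →
    tform Q = tform Q' → Q = Q'
  | [], [], _, _, _, _, _ => rfl
  | [], (s', B') :: R', _, _, _, _, h => by simp at h
  | (s, B) :: R, [], _, _, _, _, h => by simp at h
  | (s, B) :: R, (s', B') :: R', hpw, hb, hpw', hb', h => by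
      simp only [tform_cons, List.cons.injEq] at h
      obtain ⟨rfl, h2⟩ := h
      -- show B = B' and tform R = tform R'
      have key : B = B' ∧ tform R = tform R' := by
        rcases List.append_eq_append_iff.1 h2 with ⟨e, he1, he2⟩ | ⟨e, he1, he2⟩
        · -- B' = B ++ e, tform R = e ++ tform R'
          cases e with
          | nil => simp_all
          | cons x e' =>
              exfalso
              have hx1 : x < s := hb' (s, B') (by simp) x (by simp [he1])
              have hx2 : s < x := by
                cases R with
                | nil => simp at he2
                | cons q R2 =>
                    have hq1 : x = q.1 := by
                      have := congrArg List.head? he2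
                      simpa using this.symm
                    simp only [List.map_cons, List.pairwise_cons] at hpw
                    rw [hq1]; exact hpw.1 q.1 (by simp)
              omega
        · -- B = B' ++ e, e ++ tform R = tform R'
          cases e with
          | nil => simp_all
          | cons x e' =>
              exfalso
              have hx1 : x < s := hb (s, B) (by simp) x (by simp [he1])
              have hx2 : s < x := by
                cases R' with
                | nil => simp at he2
                | cons q R2 =>
                    have hq1 : x = q.1 := by
                      have := congrArg List.head? he2.symm
                      simpa using this
                    simp only [List.map_cons, List.pairwise_cons] at hpw'
                    rw [hq1]; exact hpw'.1 q.1 (by simp)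
              omega
      obtain ⟨rfl, hR⟩ := key
      have := tform_inj R R'
        (by simp only [List.map_cons, List.pairwise_cons] at hpw; exact hpw.2)
        (fun q hq => hb q (by simp [hq]))
        (by simp only [List.map_cons, List.pairwise_cons] at hpw'; exact hpw'.2)
        (fun q hq => hb' q (by simp [hq])) hR
      rw [this]



lemma mem_sform {x : ℕ} {Q : List (ℕ × List ℕ)} :
    x ∈ sform Q ↔ ∃ q ∈ Q, x = q.1 ∨ x ∈ q.2 := by
  simp [sform, List.mem_flatMap, or_comm]

lemma sform_split (Q : List (ℕ × List ℕ)) (i : ℕ) (h : i < Q.length) :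
    sform Q = (sform (Q.take i) ++ Q[i].2) ++ Q[i].1 :: sform (Q.drop (i + 1)) := by
  conv_lhs => rw [← List.take_append_drop i Q]
  rw [sform_append, List.drop_eq_getElem_cons h, sform_cons]
  simp [List.append_assoc]

/-- everything before pivot i in sform is smaller (Lemma E). -/
lemma lt_pivot_of_mem_pre {Q : List (ℕ × List ℕ)} (hpw : (Q.map Prod.fst).Pairwise (· < ·))
    (hb : ∀ q ∈ Q, ∀ b ∈ q.2, b < q.1) {i : ℕ} (h : i < Q.length) :
    ∀ x ∈ sform (Q.take i) ++ Q[i].2, x < Q[i].1 := by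
  intro x hx
  rcases List.mem_append.1 hx with hx | hx
  · rcases mem_sform.1 hx with ⟨q, hq, hq'⟩
    have hq1 : q.1 < Q[i].1 := by
      have hsplit : Q.map Prod.fst = (Q.take i).map Prod.fst ++ (Q.drop i).map Prod.fst := by
        rw [← List.map_append, List.take_append_drop]
      rw [hsplit] at hpw
      have := (List.pairwise_append.1 hpw).2.2
      refine this q.1 (List.mem_map_of_mem hq) Q[i].1 ?_
      refine List.mem_map_of_mem ?_
      have : Q.drop i = Q[i] :: Q.drop (i+1) := List.drop_eq_getElem_cons h
      rw [this]
      exact List.mem_cons_self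
    rcases hq' with rfl | hq'
    · exact hq1
    · exact lt_trans (hb q (List.mem_of_mem_take hq) x hq') hq1
  · exact hb Q[i] (List.getElem_mem h) x hx

lemma isLTRMax_of_split {σ : List ℕ} {a b : List ℕ} {s : ℕ} (h : σ = a ++ s :: b)
    (ha : ∀ x ∈ a, x < s) : IsLTRMax σ a.length ∧ σ.getD a.length 0 = s := by
  subst h
  have hlen : a.length < (a ++ s :: b).length := by simp
  have hgd : (a ++ s :: b).getD a.length 0 = s := by
    rw [List.getD_eq_getElem _ _ hlen, List.getElem_append_right (le_refl _)]
    simp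
  refine ⟨⟨hlen, ?_⟩, hgd⟩
  intro i hi
  rw [hgd, List.getD_eq_getElem _ _ (by omega)]
  rw [List.getElem_append_left (by omega)]
  exact ha _ (List.getElem_mem _)

lemma lt_of_isLTRMax {σ : List ℕ} (hnd : σ.Nodup) {a b : List ℕ} {s : ℕ}
    (h : σ = a ++ s :: b) (hltr : ∃ j, IsLTRMax σ j ∧ σ.getD j 0 = s) :
    ∀ x ∈ a, x < s := by
  subst h
  obtain ⟨j, ⟨hj, hmax⟩, hgd⟩ := hltr
  have hlen : a.length < (a ++ s :: b).length := by simp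
  have hval : (a ++ s :: b).getD a.length 0 = s := by
    rw [List.getD_eq_getElem _ _ hlen, List.getElem_append_right (le_refl _)]
    simp
  have hja : j = a.length := by
    have h1 : (a ++ s :: b)[j] = s := by
      rw [List.getD_eq_getElem _ _ hj] at hgd; exact hgd
    have h2 : (a ++ s :: b)[a.length] = s := by
      rw [List.getD_eq_getElem _ _ hlen] at hval; exact hval
    exact (List.Nodup.getElem_inj_iff hnd).1 (h1.trans h2.symm)
  subst hja
  intro x hx
  obtain ⟨i, hi, rfl⟩ := List.getElem_of_mem hx
  have := hmax i (by omega)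
  rw [hgd, List.getD_eq_getElem _ _ (by omega)] at this
  rwa [List.getElem_append_left (by omega)] at this
    -- σ[i] = a[i]
  
lemma sform_concat_last {Q : List (ℕ × List ℕ)} (h : Q ≠ []) :
    (sform Q).getLast? = some (Q.getLast h).1 := by
  induction Q with
  | nil => simp at h
  | cons q Q ih =>
      cases Q with
      | nil => simp [sform]
      | cons q' Q' =>
          have h1 : sform (q :: q' :: Q') = (q.2 ++ [q.1]) ++ sform (q' :: Q') := by
            simp [sform]
          have h2 : sform (q' :: Q') ≠ [] := by simp [sform]
          rw [h1, List.getLast?_append_of_ne_nil _ h2, ih (by simp)]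
          simp [List.getLast_cons]



/-- blocks-before-pivot are smaller, when pivots are LTR maxima of σ. -/
lemma blocks_lt {σ : List ℕ} (hnd : σ.Nodup) {Q : List (ℕ × List ℕ)} (hσQ : σ = sform Q)
    (hpiv : ∀ q ∈ Q, ∃ j, IsLTRMax σ j ∧ σ.getD j 0 = q.1) :
    ∀ q ∈ Q, ∀ b ∈ q.2, b < q.1 := by
  intro q hq b hb
  obtain ⟨i, hi, rfl⟩ := List.getElem_of_mem hq
  have hsp : σ = (sform (Q.take i) ++ Q[i].2) ++ Q[i].1 :: sform (Q.drop (i + 1)) :=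
    hσQ.trans (sform_split Q i hi)
  exact lt_of_isLTRMax hnd hsp (hpiv _ (List.getElem_mem hi)) b (List.mem_append_right _ hb)

lemma pivots_ltr {σ : List ℕ} {Q : List (ℕ × List ℕ)} (hσQ : σ = sform Q)
    (hpw : (Q.map Prod.fst).Pairwise (· < ·)) (hb : ∀ q ∈ Q, ∀ b ∈ q.2, b < q.1) :
    ∀ q ∈ Q, ∃ j, IsLTRMax σ j ∧ σ.getD j 0 = q.1 := by
  intro q hq
  obtain ⟨i, hi, rfl⟩ := List.getElem_of_mem hq
  have := isLTRMax_of_split (hσQ.trans (sform_split Q i hi)) (lt_pivot_of_mem_pre hpw hb hi)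
  exact ⟨_, this.1, this.2⟩

lemma sform_zip (A : List ℕ) (Bs : List (List ℕ)) :
    (Bs.zip A).flatMap (fun q => q.1 ++ [q.2]) = sform (A.zip Bs) := by
  rw [← List.zip_swap A Bs, List.flatMap_map]
  simp [sform, Prod.swap]

lemma ltr_sublist (σ : List ℕ) (n : ℕ) (hσne : σ ≠ [])
    (hlastn : σ.getD (σ.length - 1) 0 = n) :
    ∀ ss : List ℕ, ∀ k, k < σ.length → ss.Chain' (· < ·) →
      (∀ s ∈ ss, s ≠ n ∧ ∃ j, k ≤ j ∧ IsLTRMax σ j ∧ σ.getD j 0 = s) →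
      (ss ++ [n]).Sublist (σ.drop k) := by
  have hlen1 : 1 ≤ σ.length := List.length_pos_iff.2 hσne
  have hlastn' : σ[σ.length - 1]'(by omega) = n := by
    rw [List.getD_eq_getElem _ _ (by omega)] at hlastn; exact hlastn
  intro ss
  induction ss with
  | nil =>
      intro k hk _ _
      simp only [List.nil_append, List.singleton_sublist]
      have hdne : σ.drop k ≠ [] := by rw [Ne, List.drop_eq_nil_iff]; omega
      have hgl : (σ.drop k).getLast hdne = n := by
        rw [List.getLast_drop, List.getLast_eq_getElem]
        exact hlastn'
      exact hgl ▸ List.getLast_mem hdne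
  | cons s ss ih =>
      intro k hk hchain hss
      obtain ⟨hsn, j, hkj, ⟨hj, hmax⟩, hgd⟩ := hss s (by simp)
      have hjs : σ[j] = s := by
        rw [List.getD_eq_getElem _ _ hj] at hgd; exact hgd
      have hjlast : j ≠ σ.length - 1 := by
        intro h; apply hsn; rw [← hjs]; simp [h, hlastn']
      have hjlt : j + 1 < σ.length := by omega
      have hih : (ss ++ [n]).Sublist (σ.drop (j + 1)) := by
        refine ih (j + 1) hjlt hchain.tail ?_
        intro s' hs'
        obtain ⟨hsn', j', hkj', ⟨hj', hmax'⟩, hgd'⟩ := hss s' (by simp [hs'])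
        have hss' : s < s' := by
          have := List.isChain_iff_pairwise.1 hchain
          exact (List.pairwise_cons.1 this).1 s' hs'
        have hj'j : j < j' := by
          rcases lt_trichotomy j' j with h | h | h
          · have := hmax j' h
            rw [hgd, hgd'] at this
            omega
          · subst h; rw [hgd] at hgd'; omega
          · exact h
        exact ⟨hsn', j', by omega, ⟨hj', hmax'⟩, hgd'⟩
      have hdecomp : σ.drop k = (σ.drop k).take (j - k) ++ s :: σ.drop (j + 1) := by
        conv_lhs => rw [← List.take_append_drop (j - k) (σ.drop k)]
        congr 1
        rw [List.drop_drop, show k + (j - k) = j by omega,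
          List.drop_eq_getElem_cons hj, hjs]
      rw [hdecomp]
      exact List.Sublist.trans (hih.cons₂ s) (List.sublist_append_right _ _)
  
lemma decomp_of_sublist (n : ℕ) : ∀ (ss : List ℕ) (m : List ℕ),
    (ss ++ [n]).Sublist m → m.getLast? = some n →
    ∃ Bs : List (List ℕ), Bs.length = ss.length + 1 ∧
      m = (Bs.zip (ss ++ [n])).flatMap fun q => q.1 ++ [q.2] := by
  intro ss
  induction ss with
  | nil =>
      intro m hsub hl
      have hmne : m ≠ [] := by rintro rfl; simp at hl
      have hglast : m.getLast hmne = n := by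
        rw [List.getLast?_eq_getLast hmne] at hl
        exact Option.some.inj hl
      refine ⟨[m.dropLast], by simp, ?_⟩
      simp only [List.nil_append, List.zip_cons_cons, List.zip_nil_right,
        List.flatMap_cons, List.flatMap_nil, List.append_nil]
      conv_lhs => rw [← List.dropLast_append_getLast hmne, hglast]
  | cons s ss ih =>
      intro m hsub hl
      rw [List.cons_append, List.cons_sublist_iff] at hsub
      obtain ⟨r₁, r₂, rfl, hsr, hsub2⟩ := hsub
      obtain ⟨u, v, rfl⟩ := List.append_of_mem hsr
      have hsub3 : (ss ++ [n]).Sublist (v ++ r₂) :=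
        hsub2.trans (List.sublist_append_right v r₂)
      have hvr_ne : v ++ r₂ ≠ [] := by
        intro h
        have := hsub3.length_le
        simp [h] at this
      have hlast2 : (v ++ r₂).getLast? = some n := by
        have : (u ++ s :: v) ++ r₂ = (u ++ [s]) ++ (v ++ r₂) := by simp
        rw [this, List.getLast?_append_of_ne_nil _ hvr_ne] at hl
        exact hl
      obtain ⟨Bs, hBlen, hBeq⟩ := ih (v ++ r₂) hsub3 hlast2
      refine ⟨u :: Bs, by simp [hBlen], ?_⟩
      simp only [List.cons_append, List.zip_cons_cons, List.flatMap_cons, ← hBeq]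
      simp


lemma cond_to_pairs (n : ℕ) (σ : List ℕ) (hnd : σ.Nodup)
    (hle : ∀ x ∈ σ, x ≤ n) (hnltr : ∃ j, IsLTRMax σ j ∧ σ.getD j 0 = n)
    (τ : List ℕ) (p : List ℕ × List (List ℕ))
    (hc1 : p.1.Chain' (· < ·))
    (hc2 : ∀ s ∈ p.1, s ≠ n ∧ ∃ j, IsLTRMax σ j ∧ σ.getD j 0 = s)
    (hc3 : p.2.length = p.1.length + 1)
    (hc4 : σ = (p.2.zip (p.1 ++ [n])).flatMap fun q => q.1 ++ [q.2])
    (hc5 : τ = ((p.1 ++ [n]).zip p.2).flatMap fun q => q.1 :: q.2) :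
    ((p.1 ++ [n]).zip p.2).map Prod.fst = p.1 ++ [n] ∧
    ((p.1 ++ [n]).zip p.2).map Prod.snd = p.2 ∧
    (((p.1 ++ [n]).zip p.2).map Prod.fst).Pairwise (· < ·) ∧
    (∀ q ∈ (p.1 ++ [n]).zip p.2, ∀ b ∈ q.2, b < q.1) ∧
    σ = sform ((p.1 ++ [n]).zip p.2) ∧ τ = tform ((p.1 ++ [n]).zip p.2) ∧
    (p.1 ++ [n]).zip p.2 ≠ [] := by
  set Q := (p.1 ++ [n]).zip p.2 with hQdef
  have hlen : (p.1 ++ [n]).length ≤ p.2.length := by simp [hc3]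
  have hfst : Q.map Prod.fst = p.1 ++ [n] := List.map_fst_zip hlen
  have hsnd : Q.map Prod.snd = p.2 := List.map_snd_zip (by simp [hc3])
  have hσQ : σ = sform Q := by rw [hc4, sform_zip]
  have hpw : (Q.map Prod.fst).Pairwise (· < ·) := by
    rw [hfst, List.pairwise_append]
    refine ⟨List.isChain_iff_pairwise.1 hc1, by simp, ?_⟩
    intro s hs b hb
    simp only [List.mem_singleton] at hb
    subst hb
    obtain ⟨hsn, hj⟩ := hc2 s hs
    have hsσ : s ∈ σ := by
      obtain ⟨j, ⟨hjl, _⟩, hgd⟩ := hj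
      rw [List.getD_eq_getElem _ _ hjl] at hgd
      exact hgd ▸ List.getElem_mem hjl
    exact lt_of_le_of_ne (hle s hsσ) hsn
  have hpiv : ∀ q ∈ Q, ∃ j, IsLTRMax σ j ∧ σ.getD j 0 = q.1 := by
    intro q hq
    have hmm : q.1 ∈ p.1 ++ [n] := hfst ▸ List.mem_map_of_mem (f := Prod.fst) hq
    rcases List.mem_append.1 hmm with h | h
    · exact (hc2 _ h).2
    · simp only [List.mem_singleton] at h; rw [h]; exact hnltr
  have hb := blocks_lt hnd hσQ hpiv
  have hQne : Q ≠ [] := by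
    intro h
    have := congrArg List.length h
    simp [hQdef, List.length_zip, hc3] at this
  exact ⟨hfst, hsnd, hpw, hb, hσQ, hc5, hQne⟩

end BB

/-- Explicit bijection between the bubblesort preimages of `σ` (with `σₙ = n`) and the
subsets `S = {s₁ < ⋯ < s_j}` of the left-to-right maxima of `σ` different from `n`:
writing `σ = B₀ s₁ B₁ s₂ ⋯ s_j B_j n`, the preimage corresponding to `S` is
`s₁ B₀ s₂ B₁ ⋯ s_j B_{j-1} n B_j`. -/
theorem stmt_5 (n : ℕ) (σ : List ℕ) (hσ : IsPermList n σ) (hlast : σ.getLast? = some n) :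
    -- every subset of the left-to-right maxima of σ different from n yields a
    -- (unique) decomposition σ = B₀ s₁ B₁ s₂ ⋯ s_j B_j n ...
    (∀ ss : List ℕ, ss.Chain' (· < ·) →
      (∀ s ∈ ss, s ≠ n ∧ ∃ j, IsLTRMax σ j ∧ σ.getD j 0 = s) →
      ∃ Bs : List (List ℕ), Bs.length = ss.length + 1 ∧
        σ = (Bs.zip (ss ++ [n])).flatMap fun q => q.1 ++ [q.2]) ∧
    -- ... and τ is a preimage of σ iff it arises from exactly one such subset as
    -- τ = s₁ B₀ s₂ B₁ ⋯ s_j B_{j-1} n B_j.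
    (∀ τ : List ℕ, bpass τ = σ ↔
      ∃! p : List ℕ × List (List ℕ),
        p.1.Chain' (· < ·) ∧
        (∀ s ∈ p.1, s ≠ n ∧ ∃ j, IsLTRMax σ j ∧ σ.getD j 0 = s) ∧
        p.2.length = p.1.length + 1 ∧
        σ = (p.2.zip (p.1 ++ [n])).flatMap (fun q => q.1 ++ [q.2]) ∧
        τ = ((p.1 ++ [n]).zip p.2).flatMap (fun q => q.1 :: q.2)) := by
  have hidn : (idList n).Nodup := by
    refine List.Nodup.map ?_ List.nodup_range
    intro a b h; simpa using h
  have hnd : σ.Nodup := hσ.nodup_iff.2 hidn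
  have hσne : σ ≠ [] := by rintro rfl; simp at hlast
  have hlen1 : 1 ≤ σ.length := List.length_pos_iff.2 hσne
  have hglast : σ.getLast hσne = n := by
    rw [List.getLast?_eq_getLast hσne] at hlast
    exact Option.some.inj hlast
  have hlastn : σ.getD (σ.length - 1) 0 = n := by
    rw [List.getD_eq_getElem _ _ (by omega), ← List.getLast_eq_getElem hσne]
    exact hglast
  have hsplitσ : σ = σ.dropLast ++ [n] := by
    conv_lhs => rw [← List.dropLast_append_getLast hσne]
    rw [hglast]
  have hle : ∀ x ∈ σ, x ≤ n := by
    intro x hx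
    have hmm : x ∈ idList n := hσ.mem_iff.1 hx
    simp only [idList, List.mem_map, List.mem_range] at hmm
    omega
  have hdlt : ∀ x ∈ σ.dropLast, x < n := by
    intro x hx
    have hxσ : x ∈ σ := List.mem_of_mem_dropLast hx
    have hxn : x ≠ n := by
      have h2 := hnd
      rw [hsplitσ, List.nodup_append] at h2
      intro h; exact h2.2.2 x hx n (by simp) h
    exact lt_of_le_of_ne (hle x hxσ) hxn
  have hnltr : ∃ j, IsLTRMax σ j ∧ σ.getD j 0 = n := by
    obtain ⟨h1, h2⟩ := BB.isLTRMax_of_split hsplitσ hdlt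
    exact ⟨_, h1, h2⟩
  constructor
  · intro ss hchain hss
    have hsub : (ss ++ [n]).Sublist σ := by
      have h := BB.ltr_sublist σ n hσne hlastn ss 0 (by omega) hchain ?_
      · simpa using h
      · intro s hs
        obtain ⟨h1, j, hj⟩ := hss s hs
        exact ⟨h1, j, Nat.zero_le _, hj⟩
    exact BB.decomp_of_sublist n ss σ hsub hlast
  · intro τ
    constructor
    · intro hbp
      have hτne : τ ≠ [] := by
        rintro rfl
        simp only [bpass] at hbp
        exact hσne hbp.symm
      have hτperm : τ.Perm σ := by
        have h := (BB.bpass_perm τ).symm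
        rwa [hbp] at h
      have hτnd : τ.Nodup := hτperm.nodup_iff.2 hnd
      obtain ⟨P, hPne, hpw, hb, htf, hsf⟩ := BB.exists_pairs τ hτne hτnd
      have hσP : σ = BB.sform P := hbp.symm.trans hsf
      have hLne : P.map Prod.fst ≠ [] := by simpa using hPne
      have hgl : (P.map Prod.fst).getLast hLne = n := by
        have h1 := BB.sform_concat_last hPne
        rw [← hσP, hlast] at h1
        have h2 : n = (P.getLast hPne).1 := Option.some.inj h1
        have h3 : (P.map Prod.fst).getLast? = some ((P.getLast hPne).1) := by
          rw [List.getLast?_map, List.getLast?_eq_getLast hPne]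
          rfl
        rw [List.getLast?_eq_getLast hLne] at h3
        rw [Option.some.inj h3, ← h2]
      have hLsplit : P.map Prod.fst = (P.map Prod.fst).dropLast ++ [n] := by
        conv_lhs => rw [← List.dropLast_append_getLast hLne]
        rw [hgl]
      have hzipP : ((P.map Prod.fst).dropLast ++ [n]).zip (P.map Prod.snd) = P := by
        rw [← hLsplit, List.zip_map']
        simp
      refine ⟨((P.map Prod.fst).dropLast, P.map Prod.snd), ⟨?_, ?_, ?_, ?_, ?_⟩, ?_⟩
      · exact List.isChain_iff_pairwise.2 (List.Pairwise.sublist (List.dropLast_sublist _) hpw)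
      · intro s hs
        constructor
        · have := (List.pairwise_append.1 (hLsplit ▸ hpw)).2.2 s hs n (by simp)
          omega
        · have hsL : s ∈ P.map Prod.fst := List.mem_of_mem_dropLast hs
          obtain ⟨q, hq, rfl⟩ := List.mem_map.1 hsL
          exact BB.pivots_ltr hσP hpw hb q hq
      · have := congrArg List.length hLsplit
        simp only [List.length_map, List.length_append, List.length_cons,
          List.length_nil] at this ⊢
        omega
      · show σ = _
        rw [BB.sform_zip, hzipP]
        exact hσP
      · show τ = BB.tform _
        rw [hzipP]
        exact htf
      · rintro ⟨ss', Bs'⟩ ⟨hc1, hc2, hc3, hc4, hc5⟩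
        obtain ⟨hfst', hsnd', hpw', hb', hσQ', hτQ', hQne'⟩ :=
          BB.cond_to_pairs n σ hnd hle hnltr τ (ss', Bs') hc1 hc2 hc3 hc4 hc5
        have hQP : (ss' ++ [n]).zip Bs' = P :=
          BB.tform_inj _ _ hpw' hb' hpw hb (hτQ'.symm.trans htf)
        dsimp only at hfst' hsnd'
        rw [hQP] at hfst' hsnd'
        have h1 : ss' ++ [n] = (P.map Prod.fst).dropLast ++ [n] :=
          hfst'.symm.trans hLsplit
        have h2 : ss' = (P.map Prod.fst).dropLast := List.append_cancel_right h1
        simp only [Prod.mk.injEq]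
        exact ⟨h2, hsnd'.symm⟩
    · rintro ⟨p, ⟨hc1, hc2, hc3, hc4, hc5⟩, -⟩
      obtain ⟨hfst, hsnd, hpw, hb, hσQ, hτQ, hQne⟩ :=
        BB.cond_to_pairs n σ hnd hle hnltr τ p hc1 hc2 hc3 hc4 hc5
      rw [hτQ, BB.bpass_tform _ hQne hpw hb, ← hσQ]
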